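/- Fix integers d ≥ 2, b ≥ 3, a set A ⊆ {0,...,b−1}, and 1 ≤ m ≤ d, and let N = Σ_{i=0}^{m−1} C(d−1, i)·|A|^i·(b−|A|)^{d−i−1}. In the graph Γ_k(d,b,A,m), the number of complete lines in the direction of the standard basis vector e_1 (i.e. the number of tuples (x_2,...,x_d) ∈ [0,b^k)^{d−1} such that the line {(t,x_2,...,x_d) : t ∈ [0,b^k)} is entirely contained in and connected in Γ_k(d,b,A,m)) is exactly N^k; such a line is complete if and only if for every digit position j < k, at most m−1 of the coordinates x_2,...,x_d have their j-th base-b digit in A. -/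

import Mathlib

open scoped Classical

/-- Reachability within the subgraph of `X` induced on a vertex set `s`. -/
def SimpleGraph.ReachIn {V : Type*} (X : SimpleGraph V) (s : Set V) (v w : V) : Prop :=
  ∃ (hv : v ∈ s) (hw : w ∈ s), (X.induce s).Reachable ⟨v, hv⟩ ⟨w, hw⟩

/-- The vertex set of the connected component of `v` in the subgraph of `X` induced on `s`
(empty if `v ∉ s`). -/
def SimpleGraph.compIn {V : Type*} (X : SimpleGraph V) (s : Set V) (v : V) : Set V :=
  {w | X.ReachIn s v w}

/-- `T` is a vertex set witnessing `cut¹ᐟ²` for the subgraph of `X` induced on the finite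
vertex set `G`: after removing `T` from `G`, every connected component has at most
`|G|/2` vertices. -/
def IsHalfCutSet {V : Type*} (X : SimpleGraph V) (G T : Finset V) : Prop :=
  T ⊆ G ∧ ∀ v : V, 2 * (X.compIn (↑(G \ T)) v).ncard ≤ G.card

/-- `cut¹ᐟ²` of the subgraph of `X` induced on the finite vertex set `G`: the least size of
a vertex set whose removal leaves all connected components of size at most `|G|/2`. -/
noncomputable def cutHalf {V : Type*} (X : SimpleGraph V) (G : Finset V) : ℕ :=
  sInf {t | ∃ T : Finset V, IsHalfCutSet X G T ∧ T.card = t}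

/-- The `1/2`-separation profile of `X`, over finite subgraphs with vertex set inside `W`. -/
noncomputable def sepHalf {V : Type*} (X : SimpleGraph V) (W : Set V) (n : ℕ) : ℕ :=
  sSup {c | ∃ G : Finset V, ↑G ⊆ W ∧ G.card ≤ n ∧ c = cutHalf X G}

/-- The `i`-th digit of `x` in base `b`. -/
def digit (b i x : ℕ) : ℕ := x / b ^ i % b

/-- Membership in the vertex set `V_k` of `Γ_k(d,b,A,m)`: all coordinates lie in `[0, b^k)`
and at every digit position `j < k`, at most `m` coordinates have their `j`-th base-`b`
digit in `A`. -/
def GenMem (d b : ℕ) (A : Finset ℕ) (m k : ℕ) (x : Fin d → ℕ) : Prop :=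
  (∀ i, x i < b ^ k) ∧
    ∀ j < k, (Finset.univ.filter fun i : Fin d => digit b j (x i) ∈ A).card ≤ m

/-- The vertex set of `S(d,b,A,m) = ⋃ₖ Γ_k(d,b,A,m)`. -/
def GenS (d b : ℕ) (A : Finset ℕ) (m : ℕ) : Set (Fin d → ℕ) :=
  {x | ∃ k, GenMem d b A m k x}

/-- The infinite graph `S(d,b,A,m)`, with edges between valid points at `ℓ¹`-distance 1. -/
def GenGraph (d b : ℕ) (A : Finset ℕ) (m : ℕ) : SimpleGraph (Fin d → ℕ) where
  Adj x y := x ∈ GenS d b A m ∧ y ∈ GenS d b A m ∧ (∑ i, |(x i : ℤ) - y i|) = 1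
  symm := by
    constructor
    rintro x y ⟨hx, hy, h⟩
    refine ⟨hy, hx, ?_⟩
    rw [← h]
    exact Finset.sum_congr rfl fun i _ => abs_sub_comm _ _
  loopless := by constructor; rintro x ⟨-, -, h⟩; simp at h

/-- The vertex set of `Γ_k(d,b,A,m)`. -/
noncomputable def GenGammaV (d b : ℕ) (A : Finset ℕ) (m k : ℕ) : Finset (Fin d → ℕ) :=
  (Fintype.piFinset fun _ : Fin d => Finset.range (b ^ k)).filter (GenMem d b A m k)

/-- The full line of length `b^k` through `x` in coordinate direction `i` is entirely
contained in `Γ_k(d,b,A,m)`. -/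
def GenLineComplete (d b : ℕ) (A : Finset ℕ) (m k : ℕ) (i : Fin d) (x : Fin d → ℕ) : Prop :=
  ∀ t < b ^ k, GenMem d b A m k (Function.update x i t)

/-- The set of points of the full line of length `b^k` through `x` in direction `i`. -/
def GenLineSet (d b k : ℕ) (i : Fin d) (x : Fin d → ℕ) : Set (Fin d → ℕ) :=
  {y | ∃ t < b ^ k, y = Function.update x i t}

/-- The vertex set of the complete-lines subgraph `C_k` of `Γ_k(d,b,A,m)`. -/
noncomputable def GenCkV (d b : ℕ) (A : Finset ℕ) (m k : ℕ) : Finset (Fin d → ℕ) :=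
  (GenGammaV d b A m k).filter fun x => ∃ i : Fin d, GenLineComplete d b A m k i x

/-- `N`, the number of single-column digit configurations of `d-1` coordinates with at
most `m-1` digits in `A`. -/
def genN (d b : ℕ) (A : Finset ℕ) (m : ℕ) : ℕ :=
  ∑ i ∈ Finset.range m, (d - 1).choose i * A.card ^ i * (b - A.card) ^ (d - i - 1)

/-- In `Γ_k(d,b,A,m)` the number of complete lines in direction `e₁` is exactly `N^k`,
where `N = Σ_{i<m} C(d-1,i)·|A|^i·(b-|A|)^(d-i-1)`; moreover such a line is complete iff
at every digit position `j < k` at most `m-1` of the coordinates `x₂,…,x_d` have their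
`j`-th base-`b` digit in `A`. -/

lemma digit_lt {b : ℕ} (hb : 0 < b) (i x : ℕ) : digit b i x < b := Nat.mod_lt _ hb

lemma digit_zero_arg (b i : ℕ) : digit b i 0 = 0 := by simp [digit]

lemma digit_succ (b j x : ℕ) : digit b (j + 1) x = digit b j (x / b) := by
  simp [digit, Nat.div_div_eq_div_mul, pow_succ, mul_comm]

lemma sum_digits_lt {b : ℕ} (hb : 0 < b) :
    ∀ (k : ℕ) (f : ℕ → ℕ), (∀ j < k, f j < b) →
      ∑ j ∈ Finset.range k, f j * b ^ j < b ^ k := by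
  intro k
  induction k with
  | zero => intro f _; simp
  | succ k ih =>
    intro f hf
    rw [Finset.sum_range_succ']
    have h1 : ∑ j ∈ Finset.range k, f (j + 1) * b ^ (j + 1)
        = b * ∑ j ∈ Finset.range k, f (j + 1) * b ^ j := by
      rw [Finset.mul_sum]; exact Finset.sum_congr rfl fun j _ => by ring
    rw [h1]
    have h2 : ∑ j ∈ Finset.range k, f (j + 1) * b ^ j < b ^ k :=
      ih _ fun j hj => hf (j + 1) (by omega)
    have h3 : f 0 < b := hf 0 (by omega)
    calc b * (∑ j ∈ Finset.range k, f (j + 1) * b ^ j) + f 0 * b ^ 0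
        < b * ((∑ j ∈ Finset.range k, f (j + 1) * b ^ j) + 1) := by
          simpa [mul_add] using h3
      _ ≤ b * b ^ k := Nat.mul_le_mul_left _ (by omega)
      _ = b ^ (k + 1) := by ring

lemma digit_sum {b : ℕ} (hb : 0 < b) :
    ∀ (j k : ℕ) (f : ℕ → ℕ), j < k → (∀ j' < k, f j' < b) →
      digit b j (∑ j' ∈ Finset.range k, f j' * b ^ j') = f j := by
  intro j
  induction j with
  | zero =>
    intro k f hj hf
    obtain ⟨k', rfl⟩ := Nat.exists_eq_succ_of_ne_zero (by omega : k ≠ 0)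
    rw [Finset.sum_range_succ']
    have h1 : ∑ j' ∈ Finset.range k', f (j' + 1) * b ^ (j' + 1)
        = b * ∑ j' ∈ Finset.range k', f (j' + 1) * b ^ j' := by
      rw [Finset.mul_sum]; exact Finset.sum_congr rfl fun j _ => by ring
    rw [h1]
    simp only [digit, pow_zero, Nat.div_one, mul_one]
    rw [Nat.mul_add_mod]
    exact Nat.mod_eq_of_lt (hf 0 (by omega))
  | succ j ihj =>
    intro k f hj hf
    obtain ⟨k', rfl⟩ := Nat.exists_eq_succ_of_ne_zero (by omega : k ≠ 0)
    rw [Finset.sum_range_succ']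
    have h1 : ∑ j' ∈ Finset.range k', f (j' + 1) * b ^ (j' + 1)
        = b * ∑ j' ∈ Finset.range k', f (j' + 1) * b ^ j' := by
      rw [Finset.mul_sum]; exact Finset.sum_congr rfl fun j _ => by ring
    rw [h1, digit_succ, pow_zero, mul_one]
    rw [Nat.mul_add_div hb, Nat.div_eq_of_lt (hf 0 (by omega)), add_zero]
    exact ihj k' (fun n => f (n + 1)) (by omega) (fun j' hj' => hf (j' + 1) (by omega))

lemma eq_of_digits {b : ℕ} (hb : 0 < b) :
    ∀ (k x y : ℕ), x < b ^ k → y < b ^ k → (∀ j < k, digit b j x = digit b j y) → x = y := by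
  intro k
  induction k with
  | zero => intro x y hx hy _; simp at hx hy; omega
  | succ k ih =>
    intro x y hx hy h
    have h0 : x % b = y % b := by
      have := h 0 (by omega); simpa [digit] using this
    have hd : x / b = y / b := by
      refine ih _ _ ?_ ?_ ?_
      · exact Nat.div_lt_of_lt_mul (by rw [← pow_succ'] ; exact hx)
      · exact Nat.div_lt_of_lt_mul (by rw [← pow_succ'] ; exact hy)
      · intro j hj
        have := h (j + 1) (by omega)
        rwa [digit_succ, digit_succ] at this
    calc x = b * (x / b) + x % b := (Nat.div_add_mod x b).symm
      _ = b * (y / b) + y % b := by rw [hd, h0]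
      _ = y := Nat.div_add_mod y b

lemma line_iff (d b m k : ℕ) (hb : 3 ≤ b) (A : Finset ℕ) (hA : A ⊆ Finset.range b)
    (hm₁ : 1 ≤ m) (i0 : Fin d) (x : Fin d → ℕ) (hx0 : x i0 = 0)
    (hx : ∀ i ≠ i0, x i < b ^ k) :
    GenLineComplete d b A m k i0 x ↔
      ∀ j < k, (Finset.univ.filter fun i : Fin d =>
        i ≠ i0 ∧ digit b j (x i) ∈ A).card ≤ m - 1 := by
  constructor
  · intro h j hj
    rcases A.eq_empty_or_nonempty with rfl | ⟨a, ha⟩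
    · simp
    · have hab : a < b := by simpa using hA ha
      have hbp : 0 < b := by omega
      set t := a * b ^ j with hT
      have ht : t < b ^ k := by
        calc t < b * b ^ j := by
              have : 0 < b ^ j := Nat.pow_pos hbp
              exact Nat.mul_lt_mul_of_lt_of_le hab (le_refl _) this
          _ = b ^ (j + 1) := by ring
          _ ≤ b ^ k := Nat.pow_le_pow_right (by omega) (by omega)
      have hdig : digit b j t = a := by
        rw [hT, digit, Nat.mul_div_cancel _ (Nat.pow_pos hbp)]
        exact Nat.mod_eq_of_lt hab
      have hmem := (h t ht).2 j hj
      have hsub : insert i0 (Finset.univ.filter fun i : Fin d =>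
          i ≠ i0 ∧ digit b j (x i) ∈ A) ⊆
          Finset.univ.filter fun i : Fin d =>
            digit b j (Function.update x i0 t i) ∈ A := by
        intro i hi
        rcases Finset.mem_insert.mp hi with rfl | hi
        · simp [Function.update_self, hdig, ha]
        · rcases Finset.mem_filter.mp hi with ⟨-, hne, hdA⟩
          simp [Function.update_of_ne hne, hdA]
      have hni : i0 ∉ (Finset.univ.filter fun i : Fin d =>
          i ≠ i0 ∧ digit b j (x i) ∈ A) := by simp
      have := Finset.card_le_card hsub
      rw [Finset.card_insert_of_notMem hni] at this
      omega
  · intro h t ht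
    refine ⟨?_, ?_⟩
    · intro i
      rcases eq_or_ne i i0 with rfl | hne
      · rwa [Function.update_self]
      · rw [Function.update_of_ne hne]; exact hx i hne
    · intro j hj
      have hsub : (Finset.univ.filter fun i : Fin d =>
          digit b j (Function.update x i0 t i) ∈ A) ⊆
          insert i0 (Finset.univ.filter fun i : Fin d =>
            i ≠ i0 ∧ digit b j (x i) ∈ A) := by
        intro i hi
        rcases eq_or_ne i i0 with rfl | hne
        · exact Finset.mem_insert_self _ _
        · refine Finset.mem_insert_of_mem (Finset.mem_filter.mpr ⟨Finset.mem_univ _, hne, ?_⟩)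
          have := (Finset.mem_filter.mp hi).2
          rwa [Function.update_of_ne hne] at this
      have h1 := Finset.card_le_card hsub
      have h2 := Finset.card_insert_le i0 (Finset.univ.filter fun i : Fin d =>
            i ≠ i0 ∧ digit b j (x i) ∈ A)
      have h3 := h j hj
      omega

lemma line_connected (d b m k : ℕ) (hb : 3 ≤ b) (A : Finset ℕ) (i0 : Fin d)
    (x : Fin d → ℕ) (hc : GenLineComplete d b A m k i0 x) :
    ((GenGraph d b A m).induce (GenLineSet d b k i0 x)).Connected := by
  have hbp : 0 < b ^ k := Nat.pow_pos (by omega)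
  have hmem : ∀ t, t < b ^ k → Function.update x i0 t ∈ GenLineSet d b k i0 x :=
    fun t ht => ⟨t, ht, rfl⟩
  have hadj : ∀ t, t + 1 < b ^ k →
      (GenGraph d b A m).Adj (Function.update x i0 t) (Function.update x i0 (t + 1)) := by
    intro t ht
    refine ⟨⟨k, hc t (by omega)⟩, ⟨k, hc (t + 1) ht⟩, ?_⟩
    rw [Finset.sum_eq_single_of_mem i0 (Finset.mem_univ _)]
    · simp
    · intro i _ hne
      rw [Function.update_of_ne hne, Function.update_of_ne hne]
      simp
  have reach : ∀ t (ht : t < b ^ k),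
      ((GenGraph d b A m).induce (GenLineSet d b k i0 x)).Reachable
        ⟨Function.update x i0 0, hmem 0 hbp⟩ ⟨Function.update x i0 t, hmem t ht⟩ := by
    intro t
    induction t with
    | zero => intro _; exact SimpleGraph.Reachable.refl _
    | succ t ih =>
      intro ht
      refine (ih (by omega)).trans (SimpleGraph.Adj.reachable ?_)
      exact hadj t ht
  rw [SimpleGraph.connected_iff]
  constructor
  · rintro ⟨u, tu, htu, rfl⟩ ⟨v, tv, htv, rfl⟩
    exact (reach tu htu).symm.trans (reach tv htv)
  · exact ⟨⟨Function.update x i0 0, hmem 0 hbp⟩⟩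

lemma col_card (d b m : ℕ) (hd : 2 ≤ d) (hb : 3 ≤ b) (A : Finset ℕ) (hA : A ⊆ Finset.range b)
    (hm₁ : 1 ≤ m) (hm₂ : m ≤ d) (i0 : Fin d) :
    ((Fintype.piFinset fun i : Fin d => if i = i0 then {0} else Finset.range b).filter
      fun y => (Finset.univ.filter fun i : Fin d => i ≠ i0 ∧ y i ∈ A).card ≤ m - 1).card
      = genN d b A m := by
  classical
  set s : Finset (Fin d) := Finset.univ.erase i0 with hs
  have hscard : s.card = d - 1 := by
    rw [hs, Finset.card_erase_of_mem (Finset.mem_univ _), Finset.card_univ, Fintype.card_fin]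
  set B : Finset (Finset (Fin d)) :=
    (Finset.range m).biUnion (fun i => Finset.powersetCard i s) with hB
  have hmemB : ∀ I, I ∈ B ↔ I ⊆ s ∧ I.card < m := by
    intro I
    simp only [hB, Finset.mem_biUnion, Finset.mem_range, Finset.mem_powersetCard]
    constructor
    · rintro ⟨i, hi, hIs, rfl⟩; exact ⟨hIs, hi⟩
    · rintro ⟨hIs, hc⟩; exact ⟨I.card, hc, hIs, rfl⟩
  have hfib : ∀ y ∈ ((Fintype.piFinset fun i : Fin d =>
        if i = i0 then {0} else Finset.range b).filter
        fun y => (Finset.univ.filter fun i : Fin d => i ≠ i0 ∧ y i ∈ A).card ≤ m - 1),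
      (Finset.univ.filter fun i : Fin d => i ≠ i0 ∧ y i ∈ A) ∈ B := by
    intro y hy
    rw [hmemB]
    refine ⟨?_, ?_⟩
    · intro i hi
      rcases Finset.mem_filter.mp hi with ⟨-, hne, -⟩
      exact Finset.mem_erase.mpr ⟨hne, Finset.mem_univ _⟩
    · have := (Finset.mem_filter.mp hy).2
      omega
  rw [Finset.card_eq_sum_card_fiberwise hfib]
  have hfibcard : ∀ I ∈ B,
      ((((Fintype.piFinset fun i : Fin d => if i = i0 then {0} else Finset.range b).filter
        fun y => (Finset.univ.filter fun i : Fin d => i ≠ i0 ∧ y i ∈ A).card ≤ m - 1)).filter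
        fun y => (Finset.univ.filter fun i : Fin d => i ≠ i0 ∧ y i ∈ A) = I).card
      = A.card ^ I.card * (b - A.card) ^ (d - 1 - I.card) := by
    intro I hI
    rw [hmemB] at hI
    obtain ⟨hIs, hIc⟩ := hI
    have hIi0 : i0 ∉ I := fun h => by simpa [hs] using hIs h
    have hset : (((Fintype.piFinset fun i : Fin d =>
          if i = i0 then {0} else Finset.range b).filter
          fun y => (Finset.univ.filter fun i : Fin d => i ≠ i0 ∧ y i ∈ A).card ≤ m - 1)).filter
          (fun y => (Finset.univ.filter fun i : Fin d => i ≠ i0 ∧ y i ∈ A) = I)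
        = Fintype.piFinset fun i : Fin d =>
            if i = i0 then {0} else if i ∈ I then A else Finset.range b \ A := by
      ext y
      simp only [Finset.mem_filter, Fintype.mem_piFinset]
      constructor
      · rintro ⟨⟨hpi, -⟩, hphi⟩
        intro i
        rcases eq_or_ne i i0 with rfl | hne
        · simpa using hpi i
        · by_cases hiI : i ∈ I
          · have : i ∈ Finset.univ.filter fun i : Fin d => i ≠ i0 ∧ y i ∈ A := by
              rw [hphi]; exact hiI
            rcases Finset.mem_filter.mp this with ⟨-, -, hyA⟩
            simp [hne, hiI, hyA]
          · have h1 : y i ∈ Finset.range b := by simpa [hne] using hpi i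
            have h2 : y i ∉ A := by
              intro hyA
              exact hiI (by
                rw [← hphi]
                exact Finset.mem_filter.mpr ⟨Finset.mem_univ _, hne, hyA⟩)
            simp [hne, hiI, Finset.mem_sdiff, h1, h2]
      · intro hy
        have hy0 : y i0 = 0 := by simpa using hy i0
        have key : ∀ i, i ≠ i0 → (y i ∈ A ↔ i ∈ I) := by
          intro i hne
          by_cases hiI : i ∈ I
          · have := hy i; simp only [if_neg hne, if_pos hiI] at this
            exact ⟨fun _ => hiI, fun _ => this⟩
          · have := hy i; simp only [if_neg hne, if_neg hiI, Finset.mem_sdiff] at this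
            exact ⟨fun h => absurd h this.2, fun h => absurd h hiI⟩
        have hphI : (Finset.univ.filter fun i : Fin d => i ≠ i0 ∧ y i ∈ A) = I := by
          ext i
          simp only [Finset.mem_filter, Finset.mem_univ, true_and]
          constructor
          · rintro ⟨hne, hyA⟩; exact (key i hne).mp hyA
          · intro hiI
            have hne : i ≠ i0 := fun h => hIi0 (h ▸ hiI)
            exact ⟨hne, (key i hne).mpr hiI⟩
        refine ⟨⟨?_, ?_⟩, hphI⟩
        · intro i
          rcases eq_or_ne i i0 with rfl | hne
          · simp [hy0]
          · by_cases hiI : i ∈ I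
            · have := hy i; simp only [if_neg hne, if_pos hiI] at this
              simpa [hne] using hA this
            · have := hy i; simp only [if_neg hne, if_neg hiI, Finset.mem_sdiff] at this
              simpa [hne] using this.1
        · rw [hphI]; omega
    rw [hset, Fintype.card_piFinset]
    have hprod : ∀ i : Fin d,
        ((if i = i0 then ({0} : Finset ℕ) else if i ∈ I then A else Finset.range b \ A)).card
        = if i = i0 then 1 else if i ∈ I then A.card else b - A.card := by
      intro i
      rcases eq_or_ne i i0 with rfl | hne
      · simp
      · by_cases hiI : i ∈ I
        · simp [hne, hiI]
        · simp [hne, hiI, Finset.card_sdiff_of_subset hA, Finset.card_range]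
    rw [Finset.prod_congr rfl fun i _ => hprod i]
    rw [← Finset.prod_erase_mul Finset.univ _ (Finset.mem_univ i0)]
    simp only [if_pos rfl, mul_one]
    rw [← Finset.prod_sdiff hIs]
    have h1 : ∀ i ∈ s \ I,
        (if i = i0 then 1 else if i ∈ I then A.card else b - A.card) = b - A.card := by
      intro i hi
      rcases Finset.mem_sdiff.mp hi with ⟨his, hiI⟩
      have hne : i ≠ i0 := (Finset.mem_erase.mp his).1
      simp [hne, hiI]
    have h2 : ∀ i ∈ I,
        (if i = i0 then 1 else if i ∈ I then A.card else b - A.card) = A.card := by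
      intro i hi
      have hne : i ≠ i0 := fun h => hIi0 (h ▸ hi)
      simp [hne, hi]
    rw [Finset.prod_congr rfl h1, Finset.prod_congr rfl h2,
      Finset.prod_const, Finset.prod_const, Finset.card_sdiff_of_subset hIs, hscard]
    simp only [if_true, if_pos trivial, mul_one]
    ring
  rw [Finset.sum_congr rfl hfibcard, hB,
    Finset.sum_biUnion (fun i _ j _ hij => Finset.pairwise_disjoint_powersetCard s hij)]
  unfold genN
  refine Finset.sum_congr rfl ?_
  intro i hi
  rw [Finset.sum_congr rfl (g := fun _ => A.card ^ i * (b - A.card) ^ (d - 1 - i)) ?_]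
  · rw [Finset.sum_const, Finset.card_powersetCard, hscard]
    have : d - 1 - i = d - i - 1 := by omega
    rw [this]; ring
  · intro I hI
    rw [(Finset.mem_powersetCard.mp hI).2]

lemma mat_card (d b m k : ℕ) (hd : 2 ≤ d) (hb : 3 ≤ b) (A : Finset ℕ)
    (hA : A ⊆ Finset.range b) (hm₁ : 1 ≤ m) (hm₂ : m ≤ d) (i0 : Fin d) :
    ((Fintype.piFinset fun i : Fin d => if i = i0 then {0} else Finset.range (b ^ k)).filter
      fun x => ∀ j < k, (Finset.univ.filter fun i : Fin d =>
        i ≠ i0 ∧ digit b j (x i) ∈ A).card ≤ m - 1).card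
      = genN d b A m ^ k := by
  classical
  have hbp : 0 < b := by omega
  set F : Finset (Fin d → ℕ) :=
    (Fintype.piFinset fun i : Fin d => if i = i0 then {0} else Finset.range b).filter
      fun y => (Finset.univ.filter fun i : Fin d => i ≠ i0 ∧ y i ∈ A).card ≤ m - 1 with hF
  have hF0 : ∀ y ∈ F, y i0 = 0 := by
    intro y hy
    have h0 := (Fintype.mem_piFinset.mp (Finset.mem_filter.mp hy).1) i0
    rwa [if_pos rfl, Finset.mem_singleton] at h0
  have hFb : ∀ y ∈ F, ∀ i, y i < b := by
    intro y hy i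
    rcases eq_or_ne i i0 with h | hne
    · rw [h, hF0 y hy]; omega
    · have := (Fintype.mem_piFinset.mp (Finset.mem_filter.mp hy).1) i
      rwa [if_neg hne, Finset.mem_range] at this
  set Ψ : (Fin k → Fin d → ℕ) → (Fin d → ℕ) :=
    fun c i => ∑ j ∈ Finset.range k, (if h : j < k then c ⟨j, h⟩ i else 0) * b ^ j with hΨ
  have hcb : ∀ c ∈ Fintype.piFinset (fun _ : Fin k => F),
      ∀ i (j : ℕ), j < k → (if h : j < k then c ⟨j, h⟩ i else 0) < b := by
    intro c hc i j hj
    rw [dif_pos hj]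
    exact hFb _ (Fintype.mem_piFinset.mp hc ⟨j, hj⟩) i
  have hΨlt : ∀ c ∈ Fintype.piFinset (fun _ : Fin k => F), ∀ i, Ψ c i < b ^ k :=
    fun c hc i => sum_digits_lt hbp k _ (hcb c hc i)
  have hΨdig : ∀ c ∈ Fintype.piFinset (fun _ : Fin k => F),
      ∀ i (j : ℕ) (hj : j < k), digit b j (Ψ c i) = c ⟨j, hj⟩ i := by
    intro c hc i j hj
    rw [hΨ]
    rw [digit_sum hbp j k _ hj (hcb c hc i), dif_pos hj]
  have hΨ0 : ∀ c ∈ Fintype.piFinset (fun _ : Fin k => F), Ψ c i0 = 0 := by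
    intro c hc
    rw [hΨ]
    refine Finset.sum_eq_zero ?_
    intro j hj
    rw [Finset.mem_range] at hj
    rw [dif_pos hj, hF0 _ (Fintype.mem_piFinset.mp hc ⟨j, hj⟩), zero_mul]
  rw [show genN d b A m ^ k = (Fintype.piFinset (fun _ : Fin k => F)).card by
    rw [Fintype.card_piFinset]
    rw [← col_card d b m hd hb A hA hm₁ hm₂ i0, ← hF]
    simp [Finset.prod_const]]
  refine Finset.card_bij' (fun x _ => fun (j : Fin k) (i : Fin d) => digit b j (x i))
    (fun c _ => Ψ c) ?_ ?_ ?_ ?_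
  · -- forward membership
    intro x hx
    rcases Finset.mem_filter.mp hx with ⟨hpi, hcond⟩
    have hx0 : x i0 = 0 := by
      have h0 := (Fintype.mem_piFinset.mp hpi) i0
      rwa [if_pos rfl, Finset.mem_singleton] at h0
    rw [Fintype.mem_piFinset]
    intro j
    rw [hF, Finset.mem_filter]
    constructor
    · rw [Fintype.mem_piFinset]
      intro i
      beta_reduce
      rcases eq_or_ne i i0 with h | hne
      · rw [h, if_pos rfl, hx0, digit_zero_arg, Finset.mem_singleton]
      · rw [if_neg hne, Finset.mem_range]
        exact digit_lt hbp _ _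
    · exact hcond j j.isLt
  · -- backward membership
    intro c hc
    rw [Finset.mem_filter]
    constructor
    · rw [Fintype.mem_piFinset]
      intro i
      rcases eq_or_ne i i0 with h | hne
      · rw [h, if_pos rfl, Finset.mem_singleton]
        exact hΨ0 c hc
      · rw [if_neg hne, Finset.mem_range]
        exact hΨlt c hc i
    · intro j hj
      have hfil : (Finset.univ.filter fun i : Fin d => i ≠ i0 ∧ digit b j (Ψ c i) ∈ A)
          = Finset.univ.filter fun i : Fin d => i ≠ i0 ∧ c ⟨j, hj⟩ i ∈ A := by
        refine Finset.filter_congr ?_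
        intro i _
        rw [hΨdig c hc i j hj]
      rw [hfil]
      exact (Finset.mem_filter.mp (Fintype.mem_piFinset.mp hc ⟨j, hj⟩)).2
  · -- left inverse
    intro x hx
    rcases Finset.mem_filter.mp hx with ⟨hpi, hcond⟩
    have hx0 : x i0 = 0 := by
      have h0 := (Fintype.mem_piFinset.mp hpi) i0
      rwa [if_pos rfl, Finset.mem_singleton] at h0
    have hxlt : ∀ i, x i < b ^ k := by
      intro i
      rcases eq_or_ne i i0 with h | hne
      · rw [h, hx0]; exact Nat.pow_pos hbp
      · have := (Fintype.mem_piFinset.mp hpi) i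
        rwa [if_neg hne, Finset.mem_range] at this
    have hmem : (fun (j : Fin k) (i : Fin d) => digit b (j : ℕ) (x i))
        ∈ Fintype.piFinset (fun _ : Fin k => F) := by
      rw [Fintype.mem_piFinset]
      intro j
      rw [hF, Finset.mem_filter]
      constructor
      · rw [Fintype.mem_piFinset]
        intro i
        beta_reduce
        rcases eq_or_ne i i0 with h | hne
        · rw [h, if_pos rfl, hx0, digit_zero_arg, Finset.mem_singleton]
        · rw [if_neg hne, Finset.mem_range]
          exact digit_lt hbp _ _
      · exact hcond j j.isLt
    funext i
    refine eq_of_digits hbp k _ _ (hΨlt _ hmem i) (hxlt i) ?_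
    intro j hj
    rw [hΨdig _ hmem i j hj]
  · -- right inverse
    intro c hc
    funext j i
    exact (hΨdig c hc i j j.isLt).trans (by rw [Fin.eta])

theorem complete_lines_count (d b m k : ℕ) (hd : 2 ≤ d) (hb : 3 ≤ b)
    (A : Finset ℕ) (hA : A ⊆ Finset.range b) (hm₁ : 1 ≤ m) (hm₂ : m ≤ d) :
    {x : Fin d → ℕ | x ⟨0, by omega⟩ = 0 ∧ (∀ i : Fin d, i ≠ ⟨0, by omega⟩ → x i < b ^ k) ∧
        GenLineComplete d b A m k ⟨0, by omega⟩ x ∧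
        ((GenGraph d b A m).induce (GenLineSet d b k ⟨0, by omega⟩ x)).Connected}.ncard
      = genN d b A m ^ k ∧
    ∀ x : Fin d → ℕ, x ⟨0, by omega⟩ = 0 → (∀ i : Fin d, i ≠ ⟨0, by omega⟩ → x i < b ^ k) →
      ((GenLineComplete d b A m k ⟨0, by omega⟩ x ∧
          ((GenGraph d b A m).induce (GenLineSet d b k ⟨0, by omega⟩ x)).Connected) ↔
        ∀ j < k, (Finset.univ.filter fun i : Fin d =>
          i ≠ ⟨0, by omega⟩ ∧ digit b j (x i) ∈ A).card ≤ m - 1) := by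
  have part2 : ∀ x : Fin d → ℕ, x ⟨0, by omega⟩ = 0 →
      (∀ i : Fin d, i ≠ ⟨0, by omega⟩ → x i < b ^ k) →
      ((GenLineComplete d b A m k ⟨0, by omega⟩ x ∧
          ((GenGraph d b A m).induce (GenLineSet d b k ⟨0, by omega⟩ x)).Connected) ↔
        ∀ j < k, (Finset.univ.filter fun i : Fin d =>
          i ≠ ⟨0, by omega⟩ ∧ digit b j (x i) ∈ A).card ≤ m - 1) := by
    intro x hx0 hx
    constructor
    · rintro ⟨hcomp, -⟩
      exact (line_iff d b m k hb A hA hm₁ _ x hx0 hx).mp hcomp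
    · intro h
      have hcomp := (line_iff d b m k hb A hA hm₁ ⟨0, by omega⟩ x hx0 hx).mpr h
      exact ⟨hcomp, line_connected d b m k hb A ⟨0, by omega⟩ x hcomp⟩
  refine ⟨?_, part2⟩
  have hset : {x : Fin d → ℕ | x ⟨0, by omega⟩ = 0 ∧
        (∀ i : Fin d, i ≠ ⟨0, by omega⟩ → x i < b ^ k) ∧
        GenLineComplete d b A m k ⟨0, by omega⟩ x ∧
        ((GenGraph d b A m).induce (GenLineSet d b k ⟨0, by omega⟩ x)).Connected} =
      ↑((Fintype.piFinset fun i : Fin d =>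
          if i = (⟨0, by omega⟩ : Fin d) then {0} else Finset.range (b ^ k)).filter
        fun x => ∀ j < k, (Finset.univ.filter fun i : Fin d =>
          i ≠ (⟨0, by omega⟩ : Fin d) ∧ digit b j (x i) ∈ A).card ≤ m - 1) := by
    ext x
    simp only [Set.mem_setOf_eq, Finset.mem_coe, Finset.mem_filter, Fintype.mem_piFinset]
    constructor
    · rintro ⟨hx0, hlt, hcc⟩
      refine ⟨?_, (part2 x hx0 hlt).mp hcc⟩
      intro i
      rcases eq_or_ne i (⟨0, by omega⟩ : Fin d) with h | hne
      · rw [h, if_pos rfl, Finset.mem_singleton]; exact hx0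
      · rw [if_neg hne, Finset.mem_range]; exact hlt i hne
    · rintro ⟨hpi, hcond⟩
      have hx0 : x ⟨0, by omega⟩ = 0 := by
        have := hpi ⟨0, by omega⟩
        rwa [if_pos rfl, Finset.mem_singleton] at this
      have hlt : ∀ i : Fin d, i ≠ ⟨0, by omega⟩ → x i < b ^ k := by
        intro i hne
        have := hpi i
        rwa [if_neg hne, Finset.mem_range] at this
      exact ⟨hx0, hlt, (part2 x hx0 hlt).mpr hcond⟩
  rw [hset, Set.ncard_coe_finset]
  exact mat_card d b m k hd hb A hA hm₁ hm₂ _
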